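/- Let R' = F₂[U,V] be the polynomial ring in two variables over F₂ = ℤ/2ℤ, let C be a finitely generated free R'-module with a distinguished basis B, and let x_0, x_1, x_2, x_3 be four pairwise distinct elements of B. Then there is no R'-linear map ∂ : C → C satisfying all of the following conditions: (i) ∂∘∂ = 0; (ii) ∂x_1 − U·x_0 − V·x_2 ∈ UV·C; (iii) ∂x_2 − U·x_3 ∈ UV·C; (iv) ∂x_0 ∈ UV·C; (v) ∂ is reduced, i.e., for all basis elements y, b ∈ B the coefficient [∂y : b] lies in the ideal (U, V) (equivalently, has zero constant term). -/

import Mathlib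

open MvPolynomial

/-- The polynomial ring `F₂[U,V]`. -/
abbrev Rpoly : Type := MvPolynomial (Fin 2) (ZMod 2)

/-- The variable `U` of `F₂[U,V]`. -/
noncomputable abbrev Uvar : Rpoly := X 0

/-- The variable `V` of `F₂[U,V]`. -/
noncomputable abbrev Vvar : Rpoly := X 1

/-- Over `R' = F₂[U,V]`, a finitely generated free module `C`
with basis `B` containing four pairwise distinct elements `x_0, x_1, x_2, x_3`:
there is no `R'`-linear map `∂ : C → C` with `∂∘∂ = 0`,
`∂x_1 ≡ U·x_0 + V·x_2`, `∂x_2 ≡ U·x_3`, `∂x_0 ≡ 0` (mod `UV·C`), which is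
moreover reduced, i.e. every coefficient `[∂y : b]` lies in the ideal
`(U, V)`. -/
theorem no_reduced_differential_C_one_negone_negone
    {ι : Type*} [Fintype ι] {C : Type*} [AddCommGroup C] [Module Rpoly C]
    (b : Module.Basis ι Rpoly C) (i0 i1 i2 i3 : ι)
    (hdist : List.Pairwise (· ≠ ·) [i0, i1, i2, i3]) :
    ¬ ∃ del : C →ₗ[Rpoly] C,
      (del ∘ₗ del = 0) ∧
      (∀ j : ι, Uvar * Vvar ∣
        b.repr (del (b i1) - Uvar • b i0 - Vvar • b i2) j) ∧
      (∀ j : ι, Uvar * Vvar ∣ b.repr (del (b i2) - Uvar • b i3) j) ∧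
      (∀ j : ι, Uvar * Vvar ∣ b.repr (del (b i0)) j) ∧
      (∀ y j : ι, b.repr (del (b y)) j ∈
        Ideal.span ({Uvar, Vvar} : Set Rpoly)) := by
  rintro ⟨d, hsq, h1, h2, h3, hred⟩
  -- the "error term" of ∂x₁
  set e : C := d (b i1) - Uvar • b i0 - Vvar • b i2 with he_def
  have he : d (b i1) = Uvar • b i0 + Vvar • b i2 + e := by
    rw [he_def]; abel
  -- coefficient of x₃ in ∂x₂
  obtain ⟨g, hg⟩ := h2 i3
  have hg' : b.repr (d (b i2)) i3 = Uvar + Uvar * Vvar * g := by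
    have : b.repr (d (b i2) - Uvar • b i3) i3
        = b.repr (d (b i2)) i3 - Uvar := by
      simp [map_sub, map_smul, Finsupp.sub_apply, Finsupp.smul_apply,
        Module.Basis.repr_self, smul_eq_mul]
    rw [this] at hg
    linear_combination hg
  -- coefficient of x₃ in ∂x₀
  obtain ⟨f, hf⟩ := h3 i3
  -- coefficient of x₃ in ∂e lies in (U²V, UV²)
  have hde : b.repr (d e) i3 ∈
      Ideal.span ({Uvar * (Uvar * Vvar), Vvar * (Uvar * Vvar)} : Set Rpoly) := by
    have : d e = ∑ y : ι, b.repr e y • d (b y) := by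
      conv_lhs => rw [← b.sum_repr e]
      rw [map_sum]; simp only [map_smul]
    rw [this]
    rw [map_sum, Finsupp.finset_sum_apply]
    refine Ideal.sum_mem _ fun y _ => ?_
    obtain ⟨k, hk⟩ := h1 y
    obtain ⟨a, c, hac⟩ := Ideal.mem_span_pair.mp (hred y i3)
    rw [Ideal.mem_span_pair]
    refine ⟨a * k, c * k, ?_⟩
    rw [map_smul, Finsupp.smul_apply, smul_eq_mul, hk, ← hac]
    ring
  obtain ⟨A, Cc, hAC⟩ := Ideal.mem_span_pair.mp hde
  -- main equation: x₃-coefficient of ∂²x₁ is 0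
  have hzero : (0 : Rpoly) = Uvar * (Uvar * Vvar * f)
      + Vvar * (Uvar + Uvar * Vvar * g)
      + (A * (Uvar * (Uvar * Vvar)) + Cc * (Vvar * (Uvar * Vvar))) := by
    have h0 : d (d (b i1)) = 0 := by
      have := LinearMap.congr_fun hsq (b i1)
      simpa using this
    have hD : d (d (b i1)) = Uvar • d (b i0) + Vvar • d (b i2) + d e := by
      rw [he]; simp [map_add, map_smul]
    have := congrArg (fun x => b.repr x i3) hD
    simp only [h0, map_zero, Finsupp.coe_zero, Pi.zero_apply, map_add,
      map_smul, Finsupp.add_apply, Finsupp.smul_apply, smul_eq_mul] at this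
    rw [hg', ← hAC, hf] at this
    exact this
  -- factor out UV
  have hfac : Uvar * Vvar *
      (Uvar * f + Vvar * g + A * Uvar + Cc * Vvar + 1) = 0 := by
    linear_combination -hzero
  have hUV : (Uvar * Vvar : Rpoly) ≠ 0 :=
    mul_ne_zero (X_ne_zero 0) (X_ne_zero 1)
  have hP : (Uvar * f + Vvar * g + A * Uvar + Cc * Vvar + 1 : Rpoly) = 0 :=
    (mul_eq_zero.mp hfac).resolve_left hUV
  have := congrArg MvPolynomial.constantCoeff hP
  simp [map_add, map_mul, constantCoeff_X] at this
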